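/- Let k be a field of characteristic p > 0 and let g, h be rational functions in k(x) with g ≠ 0. Then the rational function g^p · h is exact if and only if h is exact. -/

import Mathlib

open Polynomial

/-- `HasDerivRF f g` means `g` is the formal derivative of the rational function `f` in `k(x)`:
if `f = u / v` with `v ≠ 0`, then `g = (u' v - u v') / v ^ 2`. -/
def HasDerivRF {k : Type*} [Field k] (f g : RatFunc k) : Prop :=
  ∃ u v : Polynomial k, v ≠ 0 ∧
    f = algebraMap (Polynomial k) (RatFunc k) u / algebraMap (Polynomial k) (RatFunc k) v ∧
    g = algebraMap (Polynomial k) (RatFunc k)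
          (Polynomial.derivative u * v - u * Polynomial.derivative v) /
        algebraMap (Polynomial k) (RatFunc k) (v ^ 2)

/-- A rational function is exact if it is the formal derivative of some rational function. -/
def IsExactRF {k : Type*} [Field k] (g : RatFunc k) : Prop := ∃ f : RatFunc k, HasDerivRF f g

lemma aux11 {k : Type*} [Field k] (p : ℕ) [CharP k p]
    (g h : RatFunc k) (hg : g ≠ 0) (hh : IsExactRF h) : IsExactRF (g ^ p * h) := by
  obtain ⟨f, u, v, hv, hf, hd⟩ := hh
  have ha : g.num ≠ 0 := RatFunc.num_ne_zero hg
  have hb : g.denom ≠ 0 := g.denom_ne_zero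
  set a := g.num
  set b := g.denom
  have hgab : g = algebraMap (Polynomial k) (RatFunc k) a / algebraMap (Polynomial k) (RatFunc k) b :=
    (RatFunc.num_div_denom g).symm
  have hda : derivative (a ^ p) = 0 := by
    simp [derivative_pow, CharP.cast_eq_zero]
  have hdb : derivative (b ^ p) = 0 := by
    simp [derivative_pow, CharP.cast_eq_zero]
  have hA : ∀ q : Polynomial k, q ≠ 0 → algebraMap (Polynomial k) (RatFunc k) q ≠ 0 := by
    intro q hq
    simpa using hq
  refine ⟨g ^ p * f, a ^ p * u, b ^ p * v, mul_ne_zero (pow_ne_zero _ hb) hv, ?_, ?_⟩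
  · rw [hf, hgab, map_mul, map_mul, map_pow, map_pow]
    field_simp
    ring
  · rw [hd, hgab, derivative_mul, derivative_mul, hda, hdb]
    simp only [zero_mul, mul_zero, zero_add, add_zero]
    simp only [map_mul, map_pow, map_sub]
    have h1 := hA v hv
    have h2 := hA a ha
    have h3 := hA b hb
    field_simp
    have key : algebraMap (Polynomial k) (RatFunc k) b ^ p * (algebraMap (Polynomial k) (RatFunc k) b)⁻¹ ^ p = 1 := by
      rw [← mul_pow, mul_inv_cancel₀ h3, one_pow]
    linear_combination (algebraMap (Polynomial k) (RatFunc k) a ^ p * (algebraMap (Polynomial k) (RatFunc k) (derivative u) * algebraMap (Polynomial k) (RatFunc k) v - algebraMap (Polynomial k) (RatFunc k) u * algebraMap (Polynomial k) (RatFunc k) (derivative v))) * key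

/-- Over a field of characteristic `p > 0`, for rational functions `g ≠ 0` and `h`,
`g^p · h` is exact iff `h` is exact. -/
theorem stmt11 {k : Type*} [Field k] (p : ℕ) [CharP k p] (hp : 0 < p)
    (g h : RatFunc k) (hg : g ≠ 0) :
    IsExactRF (g ^ p * h) ↔ IsExactRF h := by
  constructor
  · intro hex
    have := aux11 p g⁻¹ (g ^ p * h) (inv_ne_zero hg) hex
    have heq : g⁻¹ ^ p * (g ^ p * h) = h := by
      field_simp
      rw [one_div, ← mul_pow, inv_mul_cancel₀ hg, one_pow, one_mul]
    rwa [heq] at this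
  · exact aux11 p g h hg
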